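/- Let 2 ≤ k and k+2 ≤ ℓ be integers and let w₁, …, w_ℓ be positive real numbers such that w_k ≤ w_i for all 1 ≤ i ≤ k and w_{k+1} ≤ w_j for all k+1 ≤ j ≤ ℓ. Then (w₁ + ⋯ + w_{k-1} + w_{k+2} + ⋯ + w_ℓ)·(w₁ + ⋯ + w_ℓ) > (w₁ + ⋯ + w_{k-1} + w_{k+1} + ⋯ + w_ℓ)·(w₁ + ⋯ + w_k). (This is the inequality underlying the paper's counterexample showing that, in the lattice with top element x₁, n−1 pairwise incomparable elements x₂,…,xₙ and bottom element y, no weight assignment totally preserves an arbitrary plausible human-defined matching function: the strict reverse inequality required by total preservation can never hold.) -/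

import Mathlib

open Finset

/-- for positive reals w₁,…,w_ℓ with 2 ≤ k, k+2 ≤ ℓ, w_k minimal among
w₁,…,w_k and w_{k+1} minimal among w₁,…,w_ℓ, we have
(w₁+⋯+w_{k-1}+w_{k+2}+⋯+w_ℓ)·(w₁+⋯+w_ℓ) > (w₁+⋯+w_{k-1}+w_{k+1}+⋯+w_ℓ)·(w₁+⋯+w_k). -/
theorem stmt17 (k ℓ : ℕ) (hk : 2 ≤ k) (hℓ : k + 2 ≤ ℓ) (w : ℕ → ℝ)
    (hpos : ∀ i ∈ Finset.Icc 1 ℓ, 0 < w i)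
    (hmink : ∀ i ∈ Finset.Icc 1 k, w k ≤ w i)
    (hminl : ∀ j ∈ Finset.Icc (k + 1) ℓ, w (k + 1) ≤ w j) :
    (∑ i ∈ Finset.Icc 1 ℓ \ {k, k + 1}, w i) * (∑ i ∈ Finset.Icc 1 ℓ, w i) >
    (∑ i ∈ Finset.Icc 1 ℓ \ {k}, w i) * (∑ i ∈ Finset.Icc 1 k, w i) := by
  set A := ∑ i ∈ Finset.Icc 1 k, w i with hA
  set B := ∑ i ∈ Finset.Icc (k + 1) ℓ, w i with hB
  have hkl : k ≤ ℓ := by omega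
  have hsplit : (∑ i ∈ Finset.Icc 1 ℓ, w i) = A + B := by
    have h0 : ∀ n, Finset.Icc 1 n = Finset.Ioc 0 n := fun n => by
      rw [← Finset.Icc_add_one_left_eq_Ioc]; rfl
    rw [hA, hB, h0, h0, Finset.Icc_add_one_left_eq_Ioc]
    exact (Finset.sum_Ioc_consecutive w (Nat.zero_le k) hkl).symm
  have hkmem : k ∈ Finset.Icc 1 ℓ := by simp; omega
  have hk1mem : k + 1 ∈ Finset.Icc 1 ℓ := by simp; omega
  have hsub2 : ({k, k + 1} : Finset ℕ) ⊆ Finset.Icc 1 ℓ := by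
    intro x hx; simp at hx; rcases hx with h | h <;> simp [h] <;> omega
  have hsum2 : (∑ i ∈ ({k, k+1} : Finset ℕ), w i) = w k + w (k+1) := by
    rw [Finset.sum_pair (by omega)]
  have hdiff2 : (∑ i ∈ Finset.Icc 1 ℓ \ {k, k + 1}, w i) = A + B - w k - w (k+1) := by
    have := Finset.sum_sdiff (f := w) hsub2
    rw [hsum2] at this; linarith [this, hsplit]
  have hdiff1 : (∑ i ∈ Finset.Icc 1 ℓ \ {k}, w i) = A + B - w k := by
    have := Finset.sum_sdiff (f := w) (Finset.singleton_subset_iff.mpr hkmem)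
    simp at this; linarith [this, hsplit]
  rw [hdiff2, hdiff1, hsplit]
  have ha : 0 < w k := hpos k hkmem
  have hb : 0 < w (k+1) := hpos (k+1) hk1mem
  have hAge : (k : ℝ) * w k ≤ A := by
    have := Finset.card_nsmul_le_sum (Finset.Icc 1 k) w (w k) hmink
    simpa [Nat.card_Icc, nsmul_eq_mul] using this
  have hBge : ((ℓ - k : ℕ) : ℝ) * w (k+1) ≤ B := by
    have := Finset.card_nsmul_le_sum (Finset.Icc (k+1) ℓ) w (w (k+1)) hminl
    simpa [Nat.card_Icc, nsmul_eq_mul] using this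
  have hA2 : 2 * w k ≤ A := by
    have : (2 : ℝ) ≤ (k : ℝ) := by exact_mod_cast hk
    nlinarith
  have hB2 : 2 * w (k+1) ≤ B := by
    have : (2 : ℝ) ≤ ((ℓ - k : ℕ) : ℝ) := by
      have : 2 ≤ ℓ - k := by omega
      exact_mod_cast this
    nlinarith
  nlinarith [mul_nonneg (by linarith : (0:ℝ) ≤ B - 2 * w (k+1)) (by linarith : (0:ℝ) ≤ A - w k),
    mul_pos hb (by linarith : (0:ℝ) < B - w (k+1)), mul_pos ha hb, mul_pos ha hb]
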